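/- Let F be a finite field, let T, δ1, δ2 be nonnegative integers with δ1, δ2 ≤ T, and let C1 ⊆ Gr_F(T,δ1) and C2 ⊆ Gr_F(T,δ2) be nonempty sets of subspaces such that the subspace-sum map (π1, π2) ↦ π1 + π2 is injective on C1 × C2 (i.e., any two distinct pairs produce distinct sums). Then |C1| ≤ Σ_{j=0}^{δ1} |Gr_F(T−δ2, j)| and |C2| ≤ Σ_{j=0}^{δ2} |Gr_F(T−δ1, j)|. -/

import Mathlib

open Finset

noncomputable def grCard (F : Type) [Field F] [Fintype F] (N d : ℕ) : ℕ :=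
  Nat.card {W : Submodule F (Fin N → F) // Module.finrank F ↥W = d}

instance instFinSub (F : Type) [Field F] [Fintype F] (N : ℕ) :
    Finite (Submodule F (Fin N → F)) :=
  Finite.of_injective _ SetLike.coe_injective

open Classical in
lemma card_eq_bound (F : Type) [Field F] [Fintype F] (N d : ℕ) :
    Nat.card {W : Submodule F (Fin N → F) // Module.finrank F ↥W ≤ d}
      = ∑ j ∈ Finset.range (d + 1), grCard F N j := by
  haveI := Fintype.ofFinite (Submodule F (Fin N → F))
  simp only [grCard, Nat.card_eq_fintype_card, Fintype.card_subtype]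
  rw [Finset.card_eq_sum_card_fiberwise (f := fun W : Submodule F (Fin N → F) => Module.finrank F ↥W)
      (t := Finset.range (d+1)) (fun W hW => by simp at hW ⊢; omega)]
  refine Finset.sum_congr rfl fun j hj => ?_
  simp only [Finset.mem_range] at hj
  congr 1
  ext W
  simp only [Finset.mem_filter, Finset.mem_univ, true_and]
  omega

lemma key (F : Type) [Field F] [Fintype F] (T δ1 δ2 : ℕ)
    (C1 C2 : Set (Submodule F (Fin T → F)))
    (hC1 : ∀ π ∈ C1, Module.finrank F ↥π = δ1)
    (hC2 : ∀ π ∈ C2, Module.finrank F ↥π = δ2)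
    (hne2 : C2.Nonempty)
    (hinj : Set.InjOn
      (fun p : Submodule F (Fin T → F) × Submodule F (Fin T → F) => p.1 ⊔ p.2)
      (C1 ×ˢ C2)) :
    Nat.card C1 ≤ ∑ j ∈ Finset.range (δ1 + 1), grCard F (T - δ2) j := by
  obtain ⟨π2, hπ2⟩ := hne2
  have h2 : Module.finrank F (Fin T → F) = T := by simp
  have hq := Submodule.finrank_quotient_add_finrank π2
  have h3 := hC2 π2 hπ2
  have e : ((Fin T → F) ⧸ π2) ≃ₗ[F] (Fin (T - δ2) → F) :=
    LinearEquiv.ofFinrankEq _ _ (by simp; omega)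
  let g : (Fin T → F) →ₗ[F] (Fin (T - δ2) → F) := e.toLinearMap ∘ₗ π2.mkQ
  have hker : LinearMap.ker g = π2 := by
    rw [LinearMap.ker_comp, LinearEquiv.ker, Submodule.comap_bot, Submodule.ker_mkQ]
  let f : C1 → {W : Submodule F (Fin (T - δ2) → F) // Module.finrank F ↥W ≤ δ1} :=
    fun π => ⟨Submodule.map g π.1, by
      rw [← hC1 π.1 π.2]; exact Submodule.finrank_map_le g π.1⟩
  have hinjf : Function.Injective f := by
    intro a b hab
    have hab' : Submodule.map g a.1 = Submodule.map g b.1 := congrArg Subtype.val hab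
    have hsup : a.1 ⊔ π2 = b.1 ⊔ π2 := by
      have := congrArg (Submodule.comap g) hab'
      rwa [Submodule.comap_map_eq, Submodule.comap_map_eq, hker] at this
    have := hinj (Set.mk_mem_prod a.2 hπ2) (Set.mk_mem_prod b.2 hπ2) hsup
    exact Subtype.ext (congrArg Prod.fst this)
  calc Nat.card C1 ≤ _ := Nat.card_le_card_of_injective f hinjf
    _ = _ := card_eq_bound F (T - δ2) δ1

theorem coloring_bound (F : Type) [Field F] [Fintype F] (T δ1 δ2 : ℕ)
    (hδ1 : δ1 ≤ T) (hδ2 : δ2 ≤ T)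
    (C1 C2 : Set (Submodule F (Fin T → F)))
    (hC1 : ∀ π ∈ C1, Module.finrank F ↥π = δ1)
    (hC2 : ∀ π ∈ C2, Module.finrank F ↥π = δ2)
    (hne1 : C1.Nonempty) (hne2 : C2.Nonempty)
    (hinj : Set.InjOn
      (fun p : Submodule F (Fin T → F) × Submodule F (Fin T → F) => p.1 ⊔ p.2)
      (C1 ×ˢ C2)) :
    Nat.card C1 ≤ ∑ j ∈ Finset.range (δ1 + 1), grCard F (T - δ2) j ∧
    Nat.card C2 ≤ ∑ j ∈ Finset.range (δ2 + 1), grCard F (T - δ1) j := by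
  have hinj' : Set.InjOn
      (fun p : Submodule F (Fin T → F) × Submodule F (Fin T → F) => p.1 ⊔ p.2)
      (C2 ×ˢ C1) := by
    intro a ha b hb hab
    have := hinj (Set.mk_mem_prod ha.2 ha.1) (Set.mk_mem_prod hb.2 hb.1)
      (by simpa [sup_comm] using hab)
    exact Prod.ext (congrArg Prod.snd this) (congrArg Prod.fst this)
  exact ⟨key F T δ1 δ2 C1 C2 hC1 hC2 hne2 hinj,
    key F T δ2 δ1 C2 C1 hC2 hC1 hne1 hinj'⟩
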